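/- Let F : ℝ → ℂ be integrable and compactly supported, let k ∈ ℂ with Im(k) > 0, and let G(k,·) be a solution of the real-line scattering ODE with potential F at spectral parameter k. Then the upper-left entry satisfies (G(k,x))₁₁ ≠ 0 for every x ∈ ℝ. (Indeed, the quantity |(G(k,x))₁₁|²·exp(4·Im(k)·x) − |(G(k,x))₂₁|² is nondecreasing in x and strictly positive.) -/

import Mathlib

open MeasureTheory Set

/-- The matrix potential `W(k,t)` for the real-line scattering ODE. -/
noncomputable def WmatLine (F : ℝ → ℂ) (k : ℂ) (t : ℝ) : Matrix (Fin 2) (Fin 2) ℂ :=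
  !![0, F t * Complex.exp (2 * Complex.I * k * t);
     (starRingEnd ℂ) (F t) * Complex.exp (-(2 * Complex.I * k * t)), 0]

/-- `G` is a solution of the real-line scattering ODE with potential `F`
at spectral parameter `k`. -/
def IsSolutionLine (F : ℝ → ℂ) (k : ℂ) (G : ℝ → Matrix (Fin 2) (Fin 2) ℂ) : Prop :=
  Continuous G ∧
  ∀ x : ℝ, ∀ i j : Fin 2,
    G x i j = (1 : Matrix (Fin 2) (Fin 2) ℂ) i j +
      ∫ t in Set.Iic x, (WmatLine F k t * G t) i j

noncomputable section ScatterAux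

local notation "conjC" => starRingEnd ℂ

lemma scatter_integrable_conj {f : ℝ → ℂ} (hf : Integrable f) :
    Integrable (fun t => conjC (f t)) := by
  refine hf.norm.mono' ((Complex.continuous_conj).comp_aestronglyMeasurable hf.1) ?_
  exact ae_of_all _ fun t => by simp

lemma scatter_integrable_mul {F : ℝ → ℂ} (hF : Integrable F) (hFc : HasCompactSupport F)
    {h : ℝ → ℂ} (hh : Continuous h) : Integrable (fun t => F t * h t) := by
  obtain ⟨C, hC⟩ := hFc.exists_bound_of_continuousOn hh.continuousOn
  refine (hF.norm.const_mul (max C 0)).mono' (hF.1.mul hh.aestronglyMeasurable) ?_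
  refine ae_of_all _ fun t => ?_
  by_cases ht : t ∈ tsupport F
  · rw [norm_mul, mul_comm]
    exact mul_le_mul_of_nonneg_right ((hC t ht).trans (le_max_left _ _)) (norm_nonneg _)
  · rw [image_eq_zero_of_notMem_tsupport ht]
    simp [mul_nonneg (le_max_right C 0) (norm_nonneg (F t))]

end ScatterAux

lemma aux_inter_Iic {x y t : ℝ} (ht : t ∈ Ioc x y) : Iic t ∩ Ioc x y = Ioc x t := by
  ext s
  simp only [mem_inter_iff, mem_Iic, mem_Ioc] at *
  constructor
  · rintro ⟨h1, h2, h3⟩; exact ⟨h2, h1⟩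
  · rintro ⟨h1, h2⟩; exact ⟨h2, h1, h2.trans ht.2⟩

lemma aux_inter_Iio {x y s : ℝ} (hs : s ∈ Ioc x y) : Iio s ∩ Ioc x y = Ioo x s := by
  ext t
  simp only [mem_inter_iff, mem_Iio, mem_Ioc, mem_Ioo] at *
  constructor
  · rintro ⟨h1, h2, h3⟩; exact ⟨h2, h1⟩
  · rintro ⟨h1, h2⟩; exact ⟨h2, h1, h2.le.trans hs.2⟩

lemma fubini_sym {x y : ℝ} (f g : ℝ → ℂ)
    (hf : IntegrableOn f (Ioc x y)) (hg : IntegrableOn g (Ioc x y)) :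
    (∫ t in Ioc x y, f t * ∫ s in Ioc x t, g s)
      + (∫ t in Ioc x y, (∫ s in Ioc x t, f s) * g t)
      = (∫ t in Ioc x y, f t) * ∫ t in Ioc x y, g t := by
  have hA : MeasurableSet {p : ℝ × ℝ | p.2 ≤ p.1} :=
    measurableSet_le measurable_snd measurable_fst
  have hint : Integrable (fun p : ℝ × ℝ => f p.1 * g p.2)
      ((volume.restrict (Ioc x y)).prod (volume.restrict (Ioc x y))) := hf.mul_prod hg
  have e1 : ∫ p in {p : ℝ × ℝ | p.2 ≤ p.1}, f p.1 * g p.2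
        ∂((volume.restrict (Ioc x y)).prod (volume.restrict (Ioc x y)))
      = ∫ t in Ioc x y, f t * ∫ s in Ioc x t, g s := by
    rw [← integral_indicator hA, integral_prod _ (hint.indicator hA)]
    apply setIntegral_congr_fun measurableSet_Ioc
    intro t ht
    have h1 : ∀ s : ℝ, ({p : ℝ × ℝ | p.2 ≤ p.1}).indicator
        (fun p : ℝ × ℝ => f p.1 * g p.2) (t, s)
        = (Iic t).indicator (fun s => f t * g s) s := by
      intro s
      by_cases hs : s ≤ t <;> simp [indicator, hs]
    simp_rw [h1]
    rw [integral_indicator measurableSet_Iic, Measure.restrict_restrict measurableSet_Iic,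
      aux_inter_Iic ht, integral_const_mul]
  have e2 : ∫ p in {p : ℝ × ℝ | p.2 ≤ p.1}ᶜ, f p.1 * g p.2
        ∂((volume.restrict (Ioc x y)).prod (volume.restrict (Ioc x y)))
      = ∫ t in Ioc x y, (∫ s in Ioc x t, f s) * g t := by
    rw [← integral_indicator hA.compl, integral_prod_symm _ ((hint.indicator hA.compl))]
    apply setIntegral_congr_fun measurableSet_Ioc
    intro s hs
    have h1 : ∀ t : ℝ, ({p : ℝ × ℝ | p.2 ≤ p.1}ᶜ).indicator
        (fun p : ℝ × ℝ => f p.1 * g p.2) (t, s)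
        = (Iio s).indicator (fun t => f t * g s) t := by
      intro t
      by_cases hts : t < s
      · simp [indicator, hts, not_le.mpr hts]
      · simp [indicator, hts, not_lt.mp hts]
    simp_rw [h1]
    rw [integral_indicator measurableSet_Iio, Measure.restrict_restrict measurableSet_Iio,
      aux_inter_Iio hs]
    rw [show (∫ t in Ioo x s, f t * g s) = g s * (∫ t in Ioo x s, f t) by
      simp_rw [mul_comm _ (g s)]; rw [integral_const_mul]]
    rw [← integral_Ioc_eq_integral_Ioo]
    exact mul_comm _ _
  calc (∫ t in Ioc x y, f t * ∫ s in Ioc x t, g s)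
      + (∫ t in Ioc x y, (∫ s in Ioc x t, f s) * g t)
      = ∫ p : ℝ × ℝ, f p.1 * g p.2
        ∂((volume.restrict (Ioc x y)).prod (volume.restrict (Ioc x y))) := by
        rw [← e1, ← e2, integral_add_compl hA hint]
    _ = (∫ t in Ioc x y, f t) * ∫ t in Ioc x y, g t := integral_prod_mul f g

lemma prod_rule {x y : ℝ} (hxy : x ≤ y) (f g u v : ℝ → ℂ)
    (hf : IntegrableOn f (Ioc x y)) (hg : IntegrableOn g (Ioc x y))
    (huc : ContinuousOn u (Icc x y)) (hvc : ContinuousOn v (Icc x y))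
    (hu : ∀ t ∈ Icc x y, u t = u x + ∫ s in Ioc x t, f s)
    (hv : ∀ t ∈ Icc x y, v t = v x + ∫ s in Ioc x t, g s) :
    u y * v y = u x * v x + ∫ t in Ioc x y, (f t * v t + u t * g t) := by
  have hfv : IntegrableOn (fun t => f t * v t) (Ioc x y) :=
    hf.mul_continuousOn_of_subset hvc measurableSet_Ioc isCompact_Icc Ioc_subset_Icc_self
  have hug : IntegrableOn (fun t => u t * g t) (Ioc x y) :=
    hg.continuousOn_mul_of_subset huc isCompact_Icc measurableSet_Ioc Ioc_subset_Icc_self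
  have hfP : IntegrableOn (fun t => f t * ∫ s in Ioc x t, g s) (Ioc x y) := by
    have h' : IntegrableOn (fun t => f t * v t - f t * v x) (Ioc x y) :=
      hfv.sub (hf.mul_const (v x))
    refine h'.congr_fun (fun t ht => ?_) measurableSet_Ioc
    beta_reduce; rw [hv t (Ioc_subset_Icc_self ht)]; ring
  have hPg : IntegrableOn (fun t => (∫ s in Ioc x t, f s) * g t) (Ioc x y) := by
    have h' : IntegrableOn (fun t => u t * g t - u x * g t) (Ioc x y) :=
      hug.sub (hg.const_mul (u x))
    refine h'.congr_fun (fun t ht => ?_) measurableSet_Ioc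
    beta_reduce; rw [hu t (Ioc_subset_Icc_self ht)]; ring
  have hfv' : ∫ t in Ioc x y, f t * v t
      = (∫ t in Ioc x y, f t) * v x + ∫ t in Ioc x y, f t * ∫ s in Ioc x t, g s := by
    rw [show (∫ t in Ioc x y, f t * v t)
        = ∫ t in Ioc x y, (f t * v x + f t * ∫ s in Ioc x t, g s) from
      setIntegral_congr_fun measurableSet_Ioc fun t ht => by
        rw [hv t (Ioc_subset_Icc_self ht)]; ring]
    rw [integral_add (hf.mul_const _) hfP, integral_mul_const]
  have hug' : ∫ t in Ioc x y, u t * g t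
      = u x * (∫ t in Ioc x y, g t) + ∫ t in Ioc x y, (∫ s in Ioc x t, f s) * g t := by
    rw [show (∫ t in Ioc x y, u t * g t)
        = ∫ t in Ioc x y, (u x * g t + (∫ s in Ioc x t, f s) * g t) from
      setIntegral_congr_fun measurableSet_Ioc fun t ht => by
        rw [hu t (Ioc_subset_Icc_self ht)]; ring]
    rw [integral_add (hg.const_mul _) hPg, integral_const_mul]
  rw [integral_add hfv hug, hfv', hug', hu y ⟨hxy, le_rfl⟩, hv y ⟨hxy, le_rfl⟩]
  linear_combination - fubini_sym f g hf hg
theorem a_nonvanishing_upper_half_plane (F : ℝ → ℂ)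
    (hF : Integrable F) (hFc : HasCompactSupport F)
    (k : ℂ) (hk : 0 < k.im)
    (G : ℝ → Matrix (Fin 2) (Fin 2) ℂ) (hG : IsSolutionLine F k G) :
    ∀ x : ℝ, G x 0 0 ≠ 0 := by
  obtain ⟨hGcont, hGeq⟩ := hG
  intro x
  set a : ℝ → ℂ := fun t => G t 0 0 with ha_def
  set b : ℝ → ℂ := fun t => G t 1 0 with hb_def
  set f : ℝ → ℂ := fun t => F t * Complex.exp (2 * Complex.I * k * t) with hf_def
  set g : ℝ → ℂ := fun t => (starRingEnd ℂ) (F t) * Complex.exp (-(2 * Complex.I * k * t))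
    with hg_def
  have hacont : Continuous a :=
    (continuous_apply (0 : Fin 2)).comp ((continuous_apply (0 : Fin 2)).comp hGcont)
  have hbcont : Continuous b :=
    (continuous_apply (0 : Fin 2)).comp ((continuous_apply (1 : Fin 2)).comp hGcont)
  have hacontc : Continuous fun t => (starRingEnd ℂ) (a t) :=
    Complex.continuous_conj.comp hacont
  have hbcontc : Continuous fun t => (starRingEnd ℂ) (b t) :=
    Complex.continuous_conj.comp hbcont
  have hW00 : ∀ t, (WmatLine F k t * G t) 0 0 = f t * b t := by
    intro t
    simp only [hf_def, hb_def]
    simp [WmatLine, Matrix.mul_apply, Fin.sum_univ_two]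
  have hW10 : ∀ t, (WmatLine F k t * G t) 1 0 = g t * a t := by
    intro t
    simp only [hg_def, ha_def]
    simp [WmatLine, Matrix.mul_apply, Fin.sum_univ_two]
  have ha0 : ∀ z, a z = 1 + ∫ t in Iic z, f t * b t := by
    intro z
    have h := hGeq z 0 0
    rw [Matrix.one_apply_eq] at h
    rw [ha_def]
    simp only []
    rw [h]
    congr 1
    exact setIntegral_congr_fun measurableSet_Iic fun t _ => hW00 t
  have hb0 : ∀ z, b z = ∫ t in Iic z, g t * a t := by
    intro z
    have h := hGeq z 1 0
    rw [Matrix.one_apply_ne (by decide : (1 : Fin 2) ≠ 0), zero_add] at h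
    rw [hb_def]
    simp only []
    rw [h]
    exact setIntegral_congr_fun measurableSet_Iic fun t _ => hW10 t
  -- global integrability of the two integrands
  have hFb : Integrable (fun t => f t * b t) := by
    have he : (fun t => f t * b t)
        = fun t => F t * (Complex.exp (2 * Complex.I * k * t) * b t) := by
      funext t; simp only [hf_def]; ring
    rw [he]
    exact scatter_integrable_mul hF hFc
      ((Complex.continuous_exp.comp (continuous_const.mul Complex.continuous_ofReal)).mul hbcont)
  have hFconj : Integrable (fun t => (starRingEnd ℂ) (F t)) := scatter_integrable_conj hF
  have hFcconj : HasCompactSupport (fun t => (starRingEnd ℂ) (F t)) :=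
    hFc.comp_left (map_zero _)
  have hGa : Integrable (fun t => g t * a t) := by
    have he : (fun t => g t * a t)
        = fun t => (starRingEnd ℂ) (F t) * (Complex.exp (-(2 * Complex.I * k * t)) * a t) := by
      funext t; simp only [hg_def]; ring
    rw [he]
    exact scatter_integrable_mul hFconj hFcconj
      ((Complex.continuous_exp.comp
        (continuous_const.mul Complex.continuous_ofReal).neg).mul hacont)
  have hFbc : Integrable (fun t => (starRingEnd ℂ) (f t * b t)) := scatter_integrable_conj hFb
  have hGac : Integrable (fun t => (starRingEnd ℂ) (g t * a t)) := scatter_integrable_conj hGa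
  -- increments
  have hstep_a : ∀ z w : ℝ, z ≤ w → a w = a z + ∫ t in Ioc z w, f t * b t := by
    intro z w hzw
    rw [ha0 w, ha0 z, ← Iic_union_Ioc_eq_Iic hzw,
      setIntegral_union (Iic_disjoint_Ioc le_rfl) measurableSet_Ioc
        hFb.integrableOn hFb.integrableOn]
    ring
  have hstep_b : ∀ z w : ℝ, z ≤ w → b w = b z + ∫ t in Ioc z w, g t * a t := by
    intro z w hzw
    rw [hb0 w, hb0 z, ← Iic_union_Ioc_eq_Iic hzw,
      setIntegral_union (Iic_disjoint_Ioc le_rfl) measurableSet_Ioc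
        hGa.integrableOn hGa.integrableOn]
  have hstep_ac : ∀ z w : ℝ, z ≤ w →
      (starRingEnd ℂ) (a w) = (starRingEnd ℂ) (a z)
        + ∫ t in Ioc z w, (starRingEnd ℂ) (f t * b t) := by
    intro z w hzw
    have h := congrArg (starRingEnd ℂ) (hstep_a z w hzw)
    rwa [map_add, ← integral_conj] at h
  have hstep_bc : ∀ z w : ℝ, z ≤ w →
      (starRingEnd ℂ) (b w) = (starRingEnd ℂ) (b z)
        + ∫ t in Ioc z w, (starRingEnd ℂ) (g t * a t) := by
    intro z w hzw
    have h := congrArg (starRingEnd ℂ) (hstep_b z w hzw)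
    rwa [map_add, ← integral_conj] at h
  -- point far to the left of the support
  obtain ⟨R, hR⟩ := hFc.isBounded.subset_closedBall 0
  set x₀ : ℝ := min x (-R - 1) with hx₀_def
  have hx₀x : x₀ ≤ x := min_le_left _ _
  have hFzero : ∀ t ≤ x₀, F t = 0 := by
    intro t ht
    apply image_eq_zero_of_notMem_tsupport
    intro hmem
    have h1 := hR hmem
    rw [Metric.mem_closedBall, Real.dist_eq, sub_zero] at h1
    have h2 : t ≤ -R - 1 := ht.trans (min_le_right _ _)
    have h3 := abs_le.mp h1
    linarith [h3.1]
  have hax₀ : a x₀ = 1 := by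
    rw [ha0 x₀]
    have hz : EqOn (fun t => f t * b t) (fun _ => (0 : ℂ)) (Iic x₀) := by
      intro t ht
      simp [hf_def, hFzero t ht]
    rw [setIntegral_congr_fun measurableSet_Iic hz, integral_zero, add_zero]
  have hbx₀ : b x₀ = 0 := by
    rw [hb0 x₀]
    have hz : EqOn (fun t => g t * a t) (fun _ => (0 : ℂ)) (Iic x₀) := by
      intro t ht
      simp [hg_def, hFzero t ht]
    rw [setIntegral_congr_fun measurableSet_Iic hz, integral_zero]
  -- the exponential weight
  set c : ℂ := ((4 * k.im : ℝ) : ℂ) with hc_def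
  set E : ℝ → ℂ := fun t => Complex.exp (c * t) with hE_def
  have hEcont : Continuous E := by
    rw [hE_def]
    exact Complex.continuous_exp.comp (continuous_const.mul Complex.continuous_ofReal)
  have hEderiv : ∀ t : ℝ, HasDerivAt E (c * E t) t := by
    intro t
    have h1 : HasDerivAt (fun s : ℝ => c * (s : ℂ)) c t := by
      simpa using (Complex.ofRealCLM.hasDerivAt (x := t)).const_mul c
    have h2 := h1.cexp
    simp only [hE_def]
    simpa [mul_comm] using h2
  have hEstep : ∀ z w : ℝ, z ≤ w → E w = E z + ∫ t in Ioc z w, c * E t := by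
    intro z w hzw
    rw [← intervalIntegral.integral_of_le hzw,
      intervalIntegral.integral_eq_sub_of_hasDerivAt (fun t _ => hEderiv t)
        ((continuous_const.mul hEcont).intervalIntegrable z w)]
    ring
  -- key pointwise exponential identities
  have h1 : ∀ t : ℝ, Complex.exp (2 * Complex.I * k * t) * E t
      = (starRingEnd ℂ) (Complex.exp (-(2 * Complex.I * k * t))) := by
    intro t
    simp only [hE_def]
    rw [← Complex.exp_conj, ← Complex.exp_add]
    congr 1
    simp only [hc_def, map_neg, map_mul, Complex.conj_I, Complex.conj_ofReal, map_ofNat]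
    push_cast
    rw [show (starRingEnd ℂ) k = k - 2 * (k.im : ℂ) * Complex.I from by
      apply Complex.ext <;> simp <;> ring]
    linear_combination (4 * (k.im : ℂ) * (t : ℂ)) * Complex.I_sq
  have hEx : ∀ t : ℝ, E t = ((Real.exp (4 * k.im * t) : ℝ) : ℂ) := by
    intro t
    simp only [hE_def, hc_def]
    rw [Complex.ofReal_exp]
    congr 1
    push_cast
    ring
  have hEreal : ∀ t : ℝ, (starRingEnd ℂ) (E t) = E t := by
    intro t
    rw [hEx t, Complex.conj_ofReal]
  have h2 : ∀ t : ℝ, (starRingEnd ℂ) (Complex.exp (2 * Complex.I * k * t)) * E t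
      = Complex.exp (-(2 * Complex.I * k * t)) := by
    intro t
    have h := congrArg (starRingEnd ℂ) (h1 t)
    rwa [map_mul, hEreal t, Complex.conj_conj] at h
  have hkey : ∀ t : ℝ, ((f t * b t) * (starRingEnd ℂ) (a t)
        + a t * (starRingEnd ℂ) (f t * b t)) * E t
      = (g t * a t) * (starRingEnd ℂ) (b t) + b t * (starRingEnd ℂ) (g t * a t) := by
    intro t
    simp only [hf_def, hg_def, map_mul, Complex.conj_conj]
    linear_combination (F t * b t * (starRingEnd ℂ) (a t)) * h1 t
      + ((starRingEnd ℂ) (F t) * a t * (starRingEnd ℂ) (b t)) * h2 t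
  -- product rule applications on [x₀, x]
  have hA : ∀ w ∈ Icc x₀ x, a w * (starRingEnd ℂ) (a w)
      = a x₀ * (starRingEnd ℂ) (a x₀)
        + ∫ t in Ioc x₀ w, ((f t * b t) * (starRingEnd ℂ) (a t)
            + a t * (starRingEnd ℂ) (f t * b t)) := by
    intro w hw
    exact prod_rule hw.1 (fun t => f t * b t) (fun t => (starRingEnd ℂ) (f t * b t))
      a (fun t => (starRingEnd ℂ) (a t)) hFb.integrableOn hFbc.integrableOn
      hacont.continuousOn hacontc.continuousOn
      (fun t ht => hstep_a x₀ t ht.1) (fun t ht => hstep_ac x₀ t ht.1)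
  have hB : b x * (starRingEnd ℂ) (b x)
      = b x₀ * (starRingEnd ℂ) (b x₀)
        + ∫ t in Ioc x₀ x, ((g t * a t) * (starRingEnd ℂ) (b t)
            + b t * (starRingEnd ℂ) (g t * a t)) :=
    prod_rule hx₀x (fun t => g t * a t) (fun t => (starRingEnd ℂ) (g t * a t))
      b (fun t => (starRingEnd ℂ) (b t)) hGa.integrableOn hGac.integrableOn
      hbcont.continuousOn hbcontc.continuousOn
      (fun t ht => hstep_b x₀ t ht.1) (fun t ht => hstep_bc x₀ t ht.1)
  have hf₂ : IntegrableOn (fun t => (f t * b t) * (starRingEnd ℂ) (a t)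
      + a t * (starRingEnd ℂ) (f t * b t)) (Ioc x₀ x) :=
    (hFb.integrableOn.mul_continuousOn_of_subset hacontc.continuousOn measurableSet_Ioc
        isCompact_Icc Ioc_subset_Icc_self).add
      (IntegrableOn.continuousOn_mul_of_subset hacont.continuousOn hFbc.integrableOn
        isCompact_Icc measurableSet_Ioc Ioc_subset_Icc_self)
  have hgterm : IntegrableOn (fun t => (g t * a t) * (starRingEnd ℂ) (b t)
      + b t * (starRingEnd ℂ) (g t * a t)) (Ioc x₀ x) :=
    (hGa.integrableOn.mul_continuousOn_of_subset hbcontc.continuousOn measurableSet_Ioc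
        isCompact_Icc Ioc_subset_Icc_self).add
      (IntegrableOn.continuousOn_mul_of_subset hbcont.continuousOn hGac.integrableOn
        isCompact_Icc measurableSet_Ioc Ioc_subset_Icc_self)
  have hcEA : IntegrableOn (fun t => c * E t * (a t * (starRingEnd ℂ) (a t))) (Ioc x₀ x) :=
    ((continuous_const.mul hEcont).mul (hacont.mul hacontc)).integrableOn_Ioc
  have hP2 : (a x * (starRingEnd ℂ) (a x)) * E x
      = (a x₀ * (starRingEnd ℂ) (a x₀)) * E x₀
        + ∫ t in Ioc x₀ x, (((f t * b t) * (starRingEnd ℂ) (a t)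
            + a t * (starRingEnd ℂ) (f t * b t)) * E t
          + (a t * (starRingEnd ℂ) (a t)) * (c * E t)) :=
    prod_rule hx₀x
      (fun t => (f t * b t) * (starRingEnd ℂ) (a t) + a t * (starRingEnd ℂ) (f t * b t))
      (fun t => c * E t) (fun t => a t * (starRingEnd ℂ) (a t)) E
      hf₂ ((continuous_const.mul hEcont).integrableOn_Ioc)
      (hacont.mul hacontc).continuousOn hEcont.continuousOn
      hA (fun t ht => hEstep x₀ t ht.1)
  have hrw : EqOn
      (fun t => ((f t * b t) * (starRingEnd ℂ) (a t)
            + a t * (starRingEnd ℂ) (f t * b t)) * E t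
          + (a t * (starRingEnd ℂ) (a t)) * (c * E t))
      (fun t => ((g t * a t) * (starRingEnd ℂ) (b t) + b t * (starRingEnd ℂ) (g t * a t))
          + c * E t * (a t * (starRingEnd ℂ) (a t))) (Ioc x₀ x) := by
    intro t _
    simp only []
    rw [hkey t]
    ring
  rw [setIntegral_congr_fun measurableSet_Ioc hrw, integral_add hgterm hcEA] at hP2
  rw [hax₀] at hP2
  rw [hbx₀] at hB
  simp only [map_one, map_zero, mul_one, one_mul, mul_zero, zero_mul, zero_add, add_zero] at hP2 hB
  have hfinalC : (a x * (starRingEnd ℂ) (a x)) * E x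
      = E x₀ + b x * (starRingEnd ℂ) (b x)
        + ∫ t in Ioc x₀ x, c * E t * (a t * (starRingEnd ℂ) (a t)) := by
    linear_combination hP2 - hB
  -- pass to real parts
  have hint_real : (∫ t in Ioc x₀ x, c * E t * (a t * (starRingEnd ℂ) (a t)))
      = ((∫ t in Ioc x₀ x, 4 * k.im * Real.exp (4 * k.im * t) * Complex.normSq (a t) : ℝ) : ℂ) := by
    calc (∫ t in Ioc x₀ x, c * E t * (a t * (starRingEnd ℂ) (a t)))
        = ∫ t in Ioc x₀ x,
            ((4 * k.im * Real.exp (4 * k.im * t) * Complex.normSq (a t) : ℝ) : ℂ) := by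
          apply setIntegral_congr_fun measurableSet_Ioc
          intro t _
          simp only [hEx t, Complex.mul_conj, hc_def]
          push_cast
          ring
      _ = _ := integral_ofReal
  have hfinalR : Complex.normSq (a x) * Real.exp (4 * k.im * x)
      = Real.exp (4 * k.im * x₀) + Complex.normSq (b x)
        + ∫ t in Ioc x₀ x, 4 * k.im * Real.exp (4 * k.im * t) * Complex.normSq (a t) := by
    have h := hfinalC
    rw [Complex.mul_conj, Complex.mul_conj, hEx x, hEx x₀, hint_real] at h
    exact_mod_cast h
  have hrpos : 0 ≤ ∫ t in Ioc x₀ x, 4 * k.im * Real.exp (4 * k.im * t) * Complex.normSq (a t) := by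
    apply setIntegral_nonneg measurableSet_Ioc
    intro t _
    have h4 : (0 : ℝ) ≤ 4 * k.im := by linarith
    exact mul_nonneg (mul_nonneg h4 (Real.exp_nonneg _)) (Complex.normSq_nonneg _)
  intro h0
  have h0' : a x = 0 := by rw [ha_def]; exact h0
  rw [h0'] at hfinalR
  simp only [map_zero, zero_mul] at hfinalR
  have he1 := Real.exp_pos (4 * k.im * x₀)
  have hb2 := Complex.normSq_nonneg (b x)
  linarith
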